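/- If q is a real polynomial of degree d such that |q(x)| ≤ c for all x in [-1,1], then |q(x)| ≤ c·|T_d(x)| for all x with |x| ≥ 1, where T_d is the degree-d Chebyshev polynomial of the first kind. -/

import Mathlib

open Polynomial Real

private lemma Tn2 (n : ℕ) : Chebyshev.T ℝ ((n:ℤ)+2) =
    2 * X * Chebyshev.T ℝ ((n:ℤ)+1) - Chebyshev.T ℝ n := Chebyshev.T_add_two ℝ n

private lemma deg2X : ((2:ℝ[X]) * X).degree ≤ 1 := by
  refine le_trans (degree_mul_le _ _) ?_
  have h2 : ((2:ℝ[X])).degree ≤ 0 := by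
    refine le_trans degree_le_natDegree ?_
    simp [natDegree_ofNat]
  calc (2:ℝ[X]).degree + X.degree ≤ 0 + 1 := by gcongr; exact degree_X_le
    _ = 1 := by norm_num

private lemma cheb_basic : ∀ n : ℕ,
    ((Chebyshev.T ℝ n).degree ≤ n)
    ∧ (∀ x : ℝ, (Chebyshev.T ℝ n).eval (-x) = (-1)^n * (Chebyshev.T ℝ n).eval x)
    ∧ (∀ x : ℝ, 1 ≤ x → 1 ≤ (Chebyshev.T ℝ n).eval x ∧
        (Chebyshev.T ℝ n).eval x ≤ (Chebyshev.T ℝ ((n+1:ℕ))).eval x) := by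
  intro n
  induction n using Nat.twoStepInduction with
  | zero =>
    refine ⟨?_, ?_, ?_⟩
    · simp [Chebyshev.T_zero]
    · simp [Chebyshev.T_zero]
    · intro x hx
      norm_num [Chebyshev.T_zero, Chebyshev.T_one]
      exact hx
  | one =>
    refine ⟨?_, ?_, ?_⟩
    · simpa [Chebyshev.T_one] using degree_X_le
    · simp [Chebyshev.T_one]
    · intro x hx
      have h2 : Chebyshev.T ℝ (((1+1:ℕ)):ℤ) = 2 * X * Chebyshev.T ℝ 1 - Chebyshev.T ℝ 0 := by
        have := Tn2 0; norm_num at this ⊢; exact this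
      constructor
      · simpa [Chebyshev.T_one] using hx
      · rw [h2]
        simp [Chebyshev.T_one, Chebyshev.T_zero]
        nlinarith
  | more n ih1 ih2 =>
    obtain ⟨hd1, hp1, hg1⟩ := ih1
    obtain ⟨hd2, hp2, hg2⟩ := ih2
    have e2 : ((n:ℤ)+2) = ((n+2:ℕ):ℤ) := by push_cast; ring
    have e1 : ((n:ℤ)+1) = ((n+1:ℕ):ℤ) := by push_cast; ring
    have hrec : Chebyshev.T ℝ ((n+2:ℕ)) =
        2 * X * Chebyshev.T ℝ ((n+1:ℕ)) - Chebyshev.T ℝ n := by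
      have := Tn2 n; rw [e2, e1] at this; exact this
    have hrec3 : Chebyshev.T ℝ ((n+2+1:ℕ)) =
        2 * X * Chebyshev.T ℝ ((n+2:ℕ)) - Chebyshev.T ℝ ((n+1:ℕ)) := by
      have := Tn2 (n+1)
      have e3 : ((n+1:ℕ):ℤ)+2 = ((n+2+1:ℕ):ℤ) := by push_cast; ring
      have e4 : ((n+1:ℕ):ℤ)+1 = ((n+2:ℕ):ℤ) := by push_cast; ring
      rw [e3, e4] at this; exact this
    refine ⟨?_, ?_, ?_⟩
    · rw [hrec]
      refine le_trans (degree_sub_le _ _) (max_le ?_ ?_)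
      · refine le_trans (degree_mul_le _ _) ?_
        calc ((2:ℝ[X])*X).degree + (Chebyshev.T ℝ ((n+1:ℕ))).degree
            ≤ 1 + ((n+1:ℕ) : WithBot ℕ) := add_le_add deg2X hd2
          _ ≤ ((n+2:ℕ) : WithBot ℕ) := le_of_eq
              (by exact_mod_cast (by omega : 1+(n+1) = n+2))
      · refine le_trans hd1 ?_
        exact_mod_cast (WithBot.coe_le_coe.mpr (by omega : n ≤ n+2))
    · intro x
      rw [hrec]
      simp only [eval_sub, eval_mul, eval_ofNat, eval_X, hp1 x, hp2 x, pow_succ]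
      ring
    · intro x hx
      obtain ⟨h1, h2⟩ := hg2 x hx
      obtain ⟨h3, h4⟩ := hg1 x hx
      have key : 1 ≤ (Chebyshev.T ℝ ((n+2:ℕ))).eval x ∧
          (Chebyshev.T ℝ ((n+1:ℕ))).eval x ≤ (Chebyshev.T ℝ ((n+2:ℕ))).eval x := by
        rw [hrec]
        simp only [eval_sub, eval_mul, eval_ofNat, eval_X]
        constructor <;> nlinarith
      refine ⟨key.1, ?_⟩
      rw [hrec3]
      simp only [eval_sub, eval_mul, eval_ofNat, eval_X]
      nlinarith [key.1, key.2, h1, h3, hx]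

private lemma one_le_abs_T (n : ℕ) (x : ℝ) (hx : 1 ≤ |x|) :
    1 ≤ |(Chebyshev.T ℝ n).eval x| := by
  rcases le_or_gt 1 x with h | h
  · have h1 := ((cheb_basic n).2.2 x h).1
    exact le_trans h1 (le_abs_self _)
  · have hx' : 1 ≤ -x := by
      rcases abs_cases x with ⟨h1, _⟩ | ⟨h1, _⟩ <;> linarith
    have h1 := ((cheb_basic n).2.2 (-x) hx').1
    have hp := (cheb_basic n).2.1 (-x)
    rw [neg_neg] at hp
    rw [hp, abs_mul, abs_pow, abs_neg, abs_one, one_pow, one_mul]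
    exact le_trans h1 (le_abs_self _)

private lemma exists_root_between (p : ℝ[X]) {a b : ℝ} (hab : a < b)
    (h : p.eval a * p.eval b < 0) : ∃ z ∈ Set.Ioo a b, p.eval z = 0 := by
  have hc : ContinuousOn (fun z => p.eval z) (Set.Icc a b) := p.continuous.continuousOn
  rcases lt_or_ge (p.eval a) 0 with ha | ha
  · have hb : 0 < p.eval b := by nlinarith
    have := intermediate_value_Ioo hab.le hc (by exact ⟨ha, hb⟩ : (0:ℝ) ∈ Set.Ioo (p.eval a) (p.eval b))
    obtain ⟨z, hz, hz0⟩ := this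
    exact ⟨z, hz, hz0⟩
  · have ha' : 0 < p.eval a := by
      rcases ha.lt_or_eq with h' | h'
      · exact h'
      · rw [← h'] at h; nlinarith
    have hb : p.eval b < 0 := by nlinarith
    have := intermediate_value_Ioo' hab.le hc (by exact ⟨hb, ha'⟩ : (0:ℝ) ∈ Set.Ioo (p.eval b) (p.eval a))
    obtain ⟨z, hz, hz0⟩ := this
    exact ⟨z, hz, hz0⟩

theorem chebyshev_growth_bound (d : ℕ) (q : Polynomial ℝ) (c : ℝ) (hc : 0 ≤ c)
    (hdeg : q.degree ≤ d)
    (hbound : ∀ x : ℝ, x ∈ Set.Icc (-1 : ℝ) 1 → |q.eval x| ≤ c) :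
    ∀ x : ℝ, 1 ≤ |x| → |q.eval x| ≤ c * |(Polynomial.Chebyshev.T ℝ d).eval x| := by
  intro x₀ hx₀
  by_cases hd0 : d = 0
  · subst hd0
    have hq : q = C (q.coeff 0) := eq_C_of_degree_le_zero (by simpa using hdeg)
    have := hbound 0 (by constructor <;> norm_num)
    rw [hq]
    simp only [Chebyshev.T_zero, Nat.cast_zero, eval_one, abs_one, mul_one, eval_C]
    simpa [← coeff_zero_eq_eval_zero] using this
  have hdpos : 0 < (d:ℝ) := by positivity
  by_contra hcon
  push_neg at hcon
  set t := (Chebyshev.T ℝ d).eval x₀ with ht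
  have hT1 : 1 ≤ |t| := one_le_abs_T d x₀ hx₀
  have hTne : t ≠ 0 := by intro h; rw [h] at hT1; norm_num at hT1
  set lam := q.eval x₀ / t with hlam
  have hclam : c < |lam| := by
    rw [hlam, abs_div, lt_div_iff₀ (by linarith)]
    exact hcon
  set s : ℝ := if 0 ≤ lam then 1 else -1 with hs
  have hs1 : |s| = 1 := by rw [hs]; split <;> norm_num
  have hs2 : s * lam = |lam| := by
    rw [hs]; split
    · rw [one_mul, abs_of_nonneg ‹_›]
    · rw [abs_of_neg (by linarith [not_le.mp ‹¬ 0 ≤ lam›])]; ring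
  set p : ℝ[X] := C (s*lam) * Chebyshev.T ℝ d - C s * q with hp
  have hdegp : p.degree ≤ d := by
    refine le_trans (degree_sub_le _ _) (max_le ?_ ?_)
    · refine le_trans (degree_mul_le _ _) ?_
      calc (C (s*lam)).degree + (Chebyshev.T ℝ d).degree ≤ 0 + (d : WithBot ℕ) := by
            gcongr
            · exact degree_C_le
            · exact (cheb_basic d).1
        _ = (d : WithBot ℕ) := by rw [zero_add]
    · refine le_trans (degree_mul_le _ _) ?_
      calc (C s).degree + q.degree ≤ 0 + (d : WithBot ℕ) := by
            gcongr
            · exact degree_C_le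
        _ = (d : WithBot ℕ) := by rw [zero_add]
  -- nodes
  have hnode_mem : ∀ k : ℕ, cos (k*π/d) ∈ Set.Icc (-1:ℝ) 1 :=
    fun k => ⟨neg_one_le_cos _, cos_le_one _⟩
  have hnodeT : ∀ k : ℕ, k ≤ d → (Chebyshev.T ℝ d).eval (cos (k*π/d)) = (-1)^k := by
    intro k hk
    rw [Chebyshev.T_real_cos (k*π/d) d]
    have : (d:ℝ) * (k*π/d) = k*π := by field_simp
    rw [show ((d:ℤ):ℝ) = (d:ℝ) by norm_cast, this]
    simpa using Real.cos_nat_mul_pi_sub 0 k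
  have hsign : ∀ k : ℕ, k ≤ d → 0 < (-1:ℝ)^k * p.eval (cos (k*π/d)) := by
    intro k hk
    have hb := hbound _ (hnode_mem k)
    rw [hp]
    simp only [eval_sub, eval_mul, eval_C, hnodeT k hk]
    have habs : |(-1:ℝ)^k * (s * q.eval (cos (k*π/d)))| = |q.eval (cos (k*π/d))| := by
      rw [abs_mul, abs_mul, abs_pow, abs_neg, abs_one, one_pow, hs1]; ring
    have h1 : (-1:ℝ)^k * (s * q.eval (cos (k*π/d))) ≤ c :=
      le_trans (le_abs_self _) (by rw [habs]; exact hb)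
    have h2 : (-1:ℝ)^k * (s * lam * (-1)^k) = s * lam := by
      rw [show ((-1:ℝ)^k * (s * lam * (-1)^k)) = s*lam*((-1)^k*(-1)^k) by ring,
        ← pow_add, Even.neg_one_pow ⟨k, by ring⟩, mul_one]
    calc (0:ℝ) < |lam| - c := by linarith
      _ ≤ (-1:ℝ)^k * (s * lam * (-1)^k) - (-1:ℝ)^k * (s * q.eval (cos (k*π/d))) := by
          rw [h2, hs2]; linarith
      _ = (-1:ℝ)^k * (s * lam * (-1)^k - s * q.eval (cos (k*π/d))) := by ring
  have hlt : ∀ k : ℕ, k < d → cos ((k+1:ℕ)*π/d) < cos (k*π/d) := by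
    intro k hk
    apply cos_lt_cos_of_nonneg_of_le_pi
    · positivity
    · rw [div_le_iff₀ hdpos]
      have : ((k:ℝ)+1) ≤ d := by exact_mod_cast hk
      push_cast
      nlinarith [pi_pos]
    · rw [div_lt_div_iff₀ hdpos hdpos]
      push_cast
      nlinarith [pi_pos]
  have hroot : ∀ k : Fin d, ∃ z ∈ Set.Ioo (cos ((k+1:ℕ)*π/d)) (cos (k*π/d)), p.eval z = 0 := by
    intro ⟨k, hk⟩
    apply exists_root_between p (hlt k hk)
    have h1 := hsign k (le_of_lt hk)
    have h2 := hsign (k+1) hk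
    rcases Nat.even_or_odd k with he | ho
    · rw [he.neg_one_pow] at h1
      rw [(by simpa using he.add_one : Odd (k+1)).neg_one_pow] at h2
      push_cast at h1 h2 ⊢
      nlinarith
    · rw [ho.neg_one_pow] at h1
      rw [(by simpa using ho.add_one : Even (k+1)).neg_one_pow] at h2
      push_cast at h1 h2 ⊢
      nlinarith
  choose y hy1 hy2 using hroot
  have hyIoo : ∀ k : Fin d, y k ∈ Set.Ioo (-1:ℝ) 1 := by
    intro k
    obtain ⟨hl, hr⟩ := hy1 k
    exact ⟨lt_of_le_of_lt (neg_one_le_cos _) hl, lt_of_lt_of_le hr (cos_le_one _)⟩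
  have hyanti : ∀ j k : Fin d, j < k → y k < y j := by
    intro j k hjk
    have h1 : y k < cos ((k:ℕ)*π/d) := (hy1 k).2
    have h2 : cos (((j:ℕ)+1:ℕ)*π/d) < y j := (hy1 j).1
    have h3 : cos ((k:ℕ)*π/d) ≤ cos (((j:ℕ)+1:ℕ)*π/d) := by
      apply cos_le_cos_of_nonneg_of_le_pi
      · positivity
      · rw [div_le_iff₀ hdpos]
        have : (k:ℝ) ≤ d := by exact_mod_cast (k.2.le)
        nlinarith [pi_pos]
      · rw [div_le_div_iff₀ hdpos hdpos]
        have hjk' : ((j:ℝ)+1) ≤ (k:ℝ) := by exact_mod_cast hjk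
        push_cast
        nlinarith [pi_pos, mul_nonneg (mul_nonneg (sub_nonneg.mpr hjk') pi_pos.le) hdpos.le]
    linarith
  have hinj : Function.Injective y := by
    intro a b hab
    by_contra hne
    rcases lt_or_gt_of_ne hne with h | h
    · exact absurd hab (ne_of_gt (hyanti a b h))
    · exact absurd hab (ne_of_lt (hyanti b a h))
  have hpx₀ : p.eval x₀ = 0 := by
    rw [hp]
    simp only [eval_sub, eval_mul, eval_C, ← ht]
    rw [hlam]
    field_simp
    ring
  have hp0 : p ≠ 0 := by
    intro h
    have h0 := hsign 0 (Nat.zero_le d)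
    rw [h] at h0
    simp at h0
  have hx₀notmem : x₀ ∉ Finset.image y Finset.univ := by
    simp only [Finset.mem_image, Finset.mem_univ, true_and]
    rintro ⟨k, rfl⟩
    obtain ⟨hl, hr⟩ := hyIoo k
    rcases abs_cases (y k) with ⟨he, _⟩ | ⟨he, _⟩ <;> rw [he] at hx₀ <;> linarith
  have hcard : (insert x₀ (Finset.image y Finset.univ)).card = d + 1 := by
    rw [Finset.card_insert_of_notMem hx₀notmem,
      Finset.card_image_of_injective _ hinj, Finset.card_univ, Fintype.card_fin]
  have hsub : insert x₀ (Finset.image y Finset.univ) ⊆ p.roots.toFinset := by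
    intro z hz
    rw [Multiset.mem_toFinset, mem_roots hp0]
    rcases Finset.mem_insert.mp hz with rfl | hz
    · exact hpx₀
    · obtain ⟨k, -, rfl⟩ := Finset.mem_image.mp hz
      exact hy2 k
  have hfin : d + 1 ≤ d := by
    calc d + 1 = (insert x₀ (Finset.image y Finset.univ)).card := hcard.symm
      _ ≤ p.roots.toFinset.card := Finset.card_le_card hsub
      _ ≤ Multiset.card p.roots := Multiset.toFinset_card_le _
      _ ≤ p.natDegree := p.card_roots'
      _ ≤ d := natDegree_le_iff_degree_le.mpr hdegp
  omega
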